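/- Let A, B, P, Q be N×N complex matrices, α, β ∈ ℂ, and set γ = α + iβ, γ̄ = α − iβ, Y = A + iB, Y' = A − iB, S = P + iQ, S' = P − iQ. With W = ((1/√2)·[[1,i],[1,-i]]) ⊗ I_N, the block matrix J = [[α,β],[-β,α]] ⊗ A + [[β,-α],[α,β]] ⊗ B + [[-Q,P],[P,Q]] (where the last term denotes the 2N×2N block matrix with blocks -Q, P; P, Q) satisfies W J W⁻¹ = [[γ̄·Y, i·S],[-i·S', γ·Y']]. -/

import Mathlib

open Matrix Complex

/-- the similarity transformation W J W⁻¹ for the network Jacobian.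
Kronecker products with 2×2 matrices are written as 2N×2N block matrices
(`Matrix.fromBlocks`), as indicated in the context. -/
theorem stmt3 {N : ℕ} (A B P Q : Matrix (Fin N) (Fin N) ℂ) (α β : ℂ)
    (γ γbar : ℂ) (hγ : γ = α + I * β) (hγbar : γbar = α - I * β)
    (Y Y' S S' : Matrix (Fin N) (Fin N) ℂ)
    (hY : Y = A + I • B) (hY' : Y' = A - I • B)
    (hS : S = P + I • Q) (hS' : S' = P - I • Q)
    (W J : Matrix (Fin N ⊕ Fin N) (Fin N ⊕ Fin N) ℂ)
    (hW : W = fromBlocks ((1 / Real.sqrt 2 : ℂ) • 1) (((I : ℂ) / Real.sqrt 2) • 1)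
        ((1 / Real.sqrt 2 : ℂ) • 1) ((-(I : ℂ) / Real.sqrt 2) • 1))
    (hJ : J = fromBlocks (α • A) (β • A) ((-β) • A) (α • A)
        + fromBlocks (β • B) ((-α) • B) (α • B) (β • B)
        + fromBlocks (-Q) P P Q) :
    W * J * W⁻¹ = fromBlocks (γbar • Y) (I • S) ((-I) • S') (γ • Y') := by
  set c : ℂ := 1 / Real.sqrt 2 with hc
  have hc2 : c ^ 2 = 1 / 2 := by
    rw [hc, div_pow, one_pow]
    rw [← Complex.ofReal_pow, Real.sq_sqrt (by norm_num : (2:ℝ) ≥ 0)]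
    norm_num
  have hWV : W * fromBlocks (c • 1) (c • 1) ((-I * c) • 1) ((I * c) • 1) = 1 := by
    rw [hW, ← fromBlocks_one]
    simp [fromBlocks_multiply, Matrix.smul_mul, Matrix.mul_smul, smul_smul, ← add_smul,
      div_eq_mul_inv, ← hc]
    ring_nf
    have h2 : ((Real.sqrt 2 : ℂ) ^ 2)⁻¹ = 1/2 := by
      rw [← Complex.ofReal_pow, Real.sq_sqrt (by norm_num : (2:ℝ) ≥ 0)]; norm_num
    simp [Complex.I_sq, h2]
    rw [← fromBlocks_one]
    congr 1
    · rw [← add_smul, show c ^ 2 + c * ((Real.sqrt 2 : ℂ))⁻¹ = 1 by rw [show c * ((Real.sqrt 2 : ℂ))⁻¹ = c ^ 2 by rw [hc]; ring, hc2]; norm_num, one_smul]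
    · rw [show -(c * ((Real.sqrt 2 : ℂ))⁻¹) + c ^ 2 = 0 by rw [hc]; ring, zero_smul]
    · rw [show -(c * ((Real.sqrt 2 : ℂ))⁻¹) + c ^ 2 = 0 by rw [hc]; ring, zero_smul]
    · rw [← add_smul, show c ^ 2 + c * ((Real.sqrt 2 : ℂ))⁻¹ = 1 by rw [show c * ((Real.sqrt 2 : ℂ))⁻¹ = c ^ 2 by rw [hc]; ring, hc2]; norm_num, one_smul]
  have hinv : W⁻¹ = fromBlocks (c • 1) (c • 1) ((-I * c) • 1) ((I * c) • 1) :=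
    Matrix.inv_eq_right_inv hWV
  rw [hinv, hJ, hW, hγ, hγbar, hY, hY', hS, hS']
  simp only [fromBlocks_add, fromBlocks_multiply]
  have hIc : (Complex.I / (Real.sqrt 2:ℂ)) = Complex.I * c := by rw [hc]; ring
  have hIc' : (-Complex.I / (Real.sqrt 2:ℂ)) = -Complex.I * c := by rw [hc]; ring
  rw [hIc, hIc']
  have h2' : ((Real.sqrt 2 : ℂ))⁻¹ ^ 2 = 1/2 := by
    rw [← one_div, div_pow, one_pow, ← Complex.ofReal_pow, Real.sq_sqrt (by norm_num : (2:ℝ) ≥ 0)]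
    norm_num
  ext i j
  rcases i with i|i <;> rcases j with j|j <;>
    simp [Matrix.add_apply, Matrix.smul_apply, Matrix.neg_apply, Matrix.smul_mul,
      Matrix.mul_smul, Matrix.sub_apply, smul_smul, smul_eq_mul] <;>
    ring_nf <;>
    simp [Complex.I_sq, hc2, h2'] <;>
    ring
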